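/- Let r ≥ 1 and let n_1, …, n_r be positive integers, and let N ≥ 2 satisfy all divisibility and size conditions for both schemes: N is divisible by each n_i and by each n_{i−1}n_i (2 ≤ i ≤ r), with N/n_i ≥ 2 for all i and N/(n_{i−1}n_i) ≥ 2 for 2 ≤ i ≤ r. Let V₁(N) be the variance of the label-v count α under the First Way, V₁(N) = N/∏ n_i − N²/∏ n_i² + N(N−1) ∏_{i=1}^r (N−n_i)/(n_i²(N−1)), and let V₂(N) be the variance under the Second Way, V₂(N) = N/∏ n_i − N²/∏ n_i² + N(N−1) (∏_{i=1}^r n_i^{−2}) ((N−n_1)/(N−1)) ∏_{i=2}^r (N−n_{i−1}n_i)/(N−n_{i−1}). Then V₂(N) ≤ V₁(N); moreover, for each 2 ≤ i ≤ r the factor inequality (N − n_{i−1} n_i)(N − 1) ≤ (N − n_i)(N − n_{i−1}) holds, which is equivalent to (n_{i−1} − 1)(n_i − 1) ≥ 0. -/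

import Mathlib

/-- **Comparison of the two ways**: with `V₁(N)` and `V₂(N)` the exact variances of the
label count in the First and Second Way respectively (their closed forms), we have
`V₂(N) ≤ V₁(N)`; moreover, for each `2 ≤ i ≤ r` the factor inequality
`(N - n_{i-1} n_i)(N - 1) ≤ (N - n_i)(N - n_{i-1})` holds, and it is equivalent to
`(n_{i-1} - 1)(n_i - 1) ≥ 0`. -/
theorem secondWay_variance_le_firstWay_variance (r : ℕ) (hr : 1 ≤ r) (n : ℕ → ℕ)
    (hn : ∀ i ∈ Finset.Icc 1 r, 0 < n i)
    (N : ℕ) (hN : 2 ≤ N)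
    (hdvd : ∀ i ∈ Finset.Icc 1 r, n i ∣ N)
    (hdvd' : ∀ i ∈ Finset.Icc 2 r, n (i - 1) * n i ∣ N)
    (hsize : ∀ i ∈ Finset.Icc 1 r, 2 ≤ N / n i)
    (hsize' : ∀ i ∈ Finset.Icc 2 r, 2 ≤ N / (n (i - 1) * n i)) :
    ((N : ℚ) / (∏ i ∈ Finset.Icc 1 r, (n i : ℚ)) -
        (N : ℚ) ^ 2 / (∏ i ∈ Finset.Icc 1 r, (n i : ℚ) ^ 2) +
        (N : ℚ) * ((N : ℚ) - 1) * (∏ i ∈ Finset.Icc 1 r, ((n i : ℚ) ^ 2)⁻¹) *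
          (((N : ℚ) - (n 1 : ℚ)) / ((N : ℚ) - 1)) *
          ∏ i ∈ Finset.Icc 2 r,
            ((N : ℚ) - (n (i - 1) : ℚ) * (n i : ℚ)) / ((N : ℚ) - (n (i - 1) : ℚ)))
      ≤
      ((N : ℚ) / (∏ i ∈ Finset.Icc 1 r, (n i : ℚ)) -
        (N : ℚ) ^ 2 / (∏ i ∈ Finset.Icc 1 r, (n i : ℚ) ^ 2) +
        (N : ℚ) * ((N : ℚ) - 1) *
          ∏ i ∈ Finset.Icc 1 r,
            ((N : ℚ) - (n i : ℚ)) / ((n i : ℚ) ^ 2 * ((N : ℚ) - 1)))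
    ∧
    ∀ i ∈ Finset.Icc 2 r,
      (((N : ℚ) - (n (i - 1) : ℚ) * (n i : ℚ)) * ((N : ℚ) - 1) ≤
          ((N : ℚ) - (n i : ℚ)) * ((N : ℚ) - (n (i - 1) : ℚ))) ∧
      ((((N : ℚ) - (n (i - 1) : ℚ) * (n i : ℚ)) * ((N : ℚ) - 1) ≤
          ((N : ℚ) - (n i : ℚ)) * ((N : ℚ) - (n (i - 1) : ℚ))) ↔
        0 ≤ ((n (i - 1) : ℚ) - 1) * ((n i : ℚ) - 1)) := by

  -- basic numeric facts
  have hN1 : (0:ℚ) < (N:ℚ) - 1 := by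
    have : (2:ℚ) ≤ (N:ℚ) := by exact_mod_cast hN
    linarith
  have hNpos : (0:ℚ) < (N:ℚ) := by linarith
  have h2n : ∀ i ∈ Finset.Icc 1 r, (2:ℚ) * (n i : ℚ) ≤ (N:ℚ) := by
    intro i hi
    have hpos := hn i hi
    have := hsize i hi
    have h : 2 * n i ≤ N := (Nat.le_div_iff_mul_le hpos).mp this
    exact_mod_cast h
  have h2n' : ∀ i ∈ Finset.Icc 2 r, (2:ℚ) * ((n (i-1) : ℚ) * (n i : ℚ)) ≤ (N:ℚ) := by
    intro i hi
    have hi' : i - 1 ∈ Finset.Icc 1 r := by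
      simp only [Finset.mem_Icc] at hi ⊢; omega
    have hi'' : i ∈ Finset.Icc 1 r := by
      simp only [Finset.mem_Icc] at hi ⊢; omega
    have hpos : 0 < n (i-1) * n i := Nat.mul_pos (hn _ hi') (hn _ hi'')
    have h : 2 * (n (i-1) * n i) ≤ N := (Nat.le_div_iff_mul_le hpos).mp (hsize' i hi)
    exact_mod_cast h
  have hn1 : ∀ i ∈ Finset.Icc 1 r, (1:ℚ) ≤ (n i : ℚ) := by
    intro i hi
    have := hn i hi
    exact_mod_cast this
  -- the key per-index statement
  have key : ∀ i ∈ Finset.Icc 2 r,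
      (((N : ℚ) - (n (i - 1) : ℚ) * (n i : ℚ)) * ((N : ℚ) - 1) ≤
          ((N : ℚ) - (n i : ℚ)) * ((N : ℚ) - (n (i - 1) : ℚ))) ∧
      ((((N : ℚ) - (n (i - 1) : ℚ) * (n i : ℚ)) * ((N : ℚ) - 1) ≤
          ((N : ℚ) - (n i : ℚ)) * ((N : ℚ) - (n (i - 1) : ℚ))) ↔
        0 ≤ ((n (i - 1) : ℚ) - 1) * ((n i : ℚ) - 1)) := by
    intro i hi
    have hi' : i - 1 ∈ Finset.Icc 1 r := by
      simp only [Finset.mem_Icc] at hi ⊢; omega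
    have hi'' : i ∈ Finset.Icc 1 r := by
      simp only [Finset.mem_Icc] at hi ⊢; omega
    have h1 := hn1 _ hi'
    have h2 := hn1 _ hi''
    constructor
    · nlinarith [mul_nonneg (sub_nonneg.mpr h1) (sub_nonneg.mpr h2)]
    · constructor
      · intro h
        nlinarith
      · intro h
        nlinarith
  refine ⟨?_, key⟩
  -- main inequality
  have hins : Finset.Icc 1 r = insert 1 (Finset.Icc 2 r) := by
    ext x
    simp only [Finset.mem_Icc, Finset.mem_insert]
    omega
  have hnot : (1:ℕ) ∉ Finset.Icc 2 r := by simp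
  have h1mem : (1:ℕ) ∈ Finset.Icc 1 r := by simp [hr]
  have hprod_eq : (∏ i ∈ Finset.Icc 1 r,
      ((N : ℚ) - (n i : ℚ)) / ((n i : ℚ) ^ 2 * ((N : ℚ) - 1))) =
      (∏ i ∈ Finset.Icc 1 r, ((n i : ℚ) ^ 2)⁻¹) *
        ∏ i ∈ Finset.Icc 1 r, ((N : ℚ) - (n i : ℚ)) / ((N : ℚ) - 1) := by
    rw [← Finset.prod_mul_distrib]
    refine Finset.prod_congr rfl fun i hi => ?_
    rw [inv_mul_eq_div, div_div, mul_comm]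
  rw [hprod_eq]
  have hPinv : (0:ℚ) ≤ ∏ i ∈ Finset.Icc 1 r, ((n i : ℚ) ^ 2)⁻¹ :=
    Finset.prod_nonneg fun i _ => by positivity
  have hsplit : (∏ i ∈ Finset.Icc 1 r, ((N : ℚ) - (n i : ℚ)) / ((N : ℚ) - 1)) =
      (((N : ℚ) - (n 1 : ℚ)) / ((N : ℚ) - 1)) *
        ∏ i ∈ Finset.Icc 2 r, ((N : ℚ) - (n i : ℚ)) / ((N : ℚ) - 1) := by
    rw [hins, Finset.prod_insert hnot]
  rw [hsplit]
  have hfirst : (0:ℚ) ≤ ((N : ℚ) - (n 1 : ℚ)) / ((N : ℚ) - 1) := by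
    have := h2n 1 h1mem
    have := hn1 1 h1mem
    apply div_nonneg _ (le_of_lt hN1)
    linarith
  have hprodle : (∏ i ∈ Finset.Icc 2 r,
      ((N : ℚ) - (n (i - 1) : ℚ) * (n i : ℚ)) / ((N : ℚ) - (n (i - 1) : ℚ))) ≤
      ∏ i ∈ Finset.Icc 2 r, ((N : ℚ) - (n i : ℚ)) / ((N : ℚ) - 1) := by
    apply Finset.prod_le_prod
    · intro i hi
      have hi' : i - 1 ∈ Finset.Icc 1 r := by
        simp only [Finset.mem_Icc] at hi ⊢; omega
      have hi'' : i ∈ Finset.Icc 1 r := by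
        simp only [Finset.mem_Icc] at hi ⊢; omega
      have h1 := hn1 _ hi'
      have h2 := hn1 _ hi''
      have h3 := h2n' i hi
      apply div_nonneg
      · nlinarith
      · nlinarith
    · intro i hi
      have hi' : i - 1 ∈ Finset.Icc 1 r := by
        simp only [Finset.mem_Icc] at hi ⊢; omega
      have hi'' : i ∈ Finset.Icc 1 r := by
        simp only [Finset.mem_Icc] at hi ⊢; omega
      have h1 := hn1 _ hi'
      have h2 := hn1 _ hi''
      have h3 := h2n' i hi
      have hden : (0:ℚ) < (N:ℚ) - (n (i-1) : ℚ) := by nlinarith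
      rw [div_le_div_iff₀ hden hN1]
      exact (key i hi).1
  have hNN : (0:ℚ) ≤ (N:ℚ) * ((N:ℚ) - 1) := by positivity
  have hmain : (N : ℚ) * ((N : ℚ) - 1) * (∏ i ∈ Finset.Icc 1 r, ((n i : ℚ) ^ 2)⁻¹) *
      (((N : ℚ) - (n 1 : ℚ)) / ((N : ℚ) - 1)) *
      (∏ i ∈ Finset.Icc 2 r,
        ((N : ℚ) - (n (i - 1) : ℚ) * (n i : ℚ)) / ((N : ℚ) - (n (i - 1) : ℚ))) ≤
      (N : ℚ) * ((N : ℚ) - 1) *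
      ((∏ i ∈ Finset.Icc 1 r, ((n i : ℚ) ^ 2)⁻¹) *
        ((((N : ℚ) - (n 1 : ℚ)) / ((N : ℚ) - 1)) *
          ∏ i ∈ Finset.Icc 2 r, ((N : ℚ) - (n i : ℚ)) / ((N : ℚ) - 1))) := by
    have := mul_le_mul_of_nonneg_left hprodle hfirst
    have := mul_le_mul_of_nonneg_left this hPinv
    have := mul_le_mul_of_nonneg_left this hNN
    calc (N : ℚ) * ((N : ℚ) - 1) * (∏ i ∈ Finset.Icc 1 r, ((n i : ℚ) ^ 2)⁻¹) *
      (((N : ℚ) - (n 1 : ℚ)) / ((N : ℚ) - 1)) *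
      (∏ i ∈ Finset.Icc 2 r,
        ((N : ℚ) - (n (i - 1) : ℚ) * (n i : ℚ)) / ((N : ℚ) - (n (i - 1) : ℚ)))
        = (N : ℚ) * ((N : ℚ) - 1) *
          ((∏ i ∈ Finset.Icc 1 r, ((n i : ℚ) ^ 2)⁻¹) *
            ((((N : ℚ) - (n 1 : ℚ)) / ((N : ℚ) - 1)) *
              ∏ i ∈ Finset.Icc 2 r,
                ((N : ℚ) - (n (i - 1) : ℚ) * (n i : ℚ)) / ((N : ℚ) - (n (i - 1) : ℚ)))) := by ring
      _ ≤ _ := this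
  linarith [hmain]
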